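/- Let k be a nonzero integer, L : Fin N → Fin N → ℤ symmetric, and q, q' : Fin N → ℤ with q' i - q i ≡ 0 mod 2k for all i. Then exp(-(2πi/(4k)) · Σ_{i,j} q i · L i j · q j) = exp(-(2πi/(4k)) · Σ_{i,j} q' i · L i j · q' j). -/

import Mathlib

open Complex Finset

/-- The abelian Chern–Simons invariant depends on the charges only mod 2k. -/
theorem colour_mod_2k (k : ℤ) (hk : k ≠ 0) (N : ℕ)
    (L : Fin N → Fin N → ℤ) (hsym : ∀ i j, L i j = L j i)
    (q q' : Fin N → ℤ) (hq : ∀ i, (2 * k) ∣ (q' i - q i)) :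
    Complex.exp (-(2 * Real.pi * Complex.I / (4 * k)) *
        ∑ i, ∑ j, (q i : ℂ) * (L i j : ℂ) * (q j : ℂ)) =
    Complex.exp (-(2 * Real.pi * Complex.I / (4 * k)) *
        ∑ i, ∑ j, (q' i : ℂ) * (L i j : ℂ) * (q' j : ℂ)) := by
  choose m hm using hq
  have hq' : ∀ i, q' i = q i + 2 * k * m i := fun i => by linarith [hm i]
  set n : ℤ := (∑ i, ∑ j, m i * L i j * q j) + k * ∑ i, ∑ j, m i * L i j * m j with hn
  have swap : ∑ i, ∑ j, q i * L i j * m j = ∑ i, ∑ j, m i * L i j * q j := by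
    rw [Finset.sum_comm]
    refine Finset.sum_congr rfl fun i _ => Finset.sum_congr rfl fun j _ => ?_
    rw [hsym]; ring
  have key : (∑ i, ∑ j, q' i * L i j * q' j)
      = (∑ i, ∑ j, q i * L i j * q j) + 4 * k * n := by
    have expand : ∀ i j, q' i * L i j * q' j
        = q i * L i j * q j + 2 * k * (m i * L i j * q j)
          + 2 * k * (q i * L i j * m j) + 4 * k ^ 2 * (m i * L i j * m j) := by
      intro i j; rw [hq' i, hq' j]; ring
    simp only [expand, Finset.sum_add_distrib, ← Finset.mul_sum, swap, hn]
    ring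
  have keyC : (∑ i, ∑ j, (q' i : ℂ) * (L i j : ℂ) * (q' j : ℂ))
      = (∑ i, ∑ j, (q i : ℂ) * (L i j : ℂ) * (q j : ℂ)) + 4 * k * n := by
    have := congrArg (fun z : ℤ => (z : ℂ)) key
    push_cast at this ⊢
    exact this
  rw [keyC]
  have hk4 : (4 * (k : ℂ)) ≠ 0 := by
    simp [Int.cast_ne_zero, hk]
  have : -(2 * (Real.pi : ℂ) * Complex.I / (4 * k)) *
      ((∑ i, ∑ j, (q i : ℂ) * (L i j : ℂ) * (q j : ℂ)) + 4 * k * n)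
      = -(2 * (Real.pi : ℂ) * Complex.I / (4 * k)) *
        (∑ i, ∑ j, (q i : ℂ) * (L i j : ℂ) * (q j : ℂ))
        + (-n : ℤ) * (2 * (Real.pi : ℂ) * Complex.I) := by
    field_simp
    push_cast
    ring
  rw [this, Complex.exp_add, Complex.exp_int_mul_two_pi_mul_I, mul_one]
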